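/- In the setting below, suppose Ã w = λ w and zᴴ Ã = λ zᴴ for some λ ∈ ℂ with λ ≠ 0, and suppose the scaling zᴴ w = 1 holds. Define the exact DMD mode φ := λ⁻¹ • (Y V Σ⁻¹) w and the adjoint DMD mode ψ := U z. Then ψᴴ φ = 1; that is, with this scaling the exact DMD modes and the adjoint DMD modes form a biorthogonal set with normalized pairing. -/

import Mathlib

open Matrix

/-- With the scaling `zᴴ w = 1`, the exact DMD mode `φ = λ⁻¹ Y V Σ⁻¹ w` and the adjoint
DMD mode `ψ = U z` satisfy `ψᴴ φ = 1` (biorthogonal normalization). -/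
theorem exact_and_adjoint_modes_biorthogonal
    {n m r : ℕ} (hn : 0 < n) (hm : 0 < m) (hr : 0 < r)
    (X Y : Matrix (Fin n) (Fin m) ℂ)
    (U : Matrix (Fin n) (Fin r) ℂ) (S : Matrix (Fin r) (Fin r) ℂ)
    (V : Matrix (Fin m) (Fin r) ℂ)
    (hX : X = U * S * Vᴴ)
    (hU : Uᴴ * U = 1) (hV : Vᴴ * V = 1)
    (hSdiag : S.IsDiag) (hSpos : ∀ i, ∃ σ : ℝ, 0 < σ ∧ S i i = (σ : ℂ))
    [Invertible S]
    (l : ℂ) (hl : l ≠ 0) (w z : Fin r → ℂ)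
    (hw : (Uᴴ * Y * V * S⁻¹).mulVec w = l • w)
    (hz : Matrix.vecMul (star z) (Uᴴ * Y * V * S⁻¹) = l • star z)
    (hzw : star z ⬝ᵥ w = 1) :
    star (U.mulVec z) ⬝ᵥ (l⁻¹ • (Y * V * S⁻¹).mulVec w) = 1 := by
  rw [star_mulVec, dotProduct_smul, dotProduct_mulVec, vecMul_vecMul]
  have : Uᴴ * (Y * V * S⁻¹) = Uᴴ * Y * V * S⁻¹ := by simp [Matrix.mul_assoc]
  rw [this, hz, smul_dotProduct, hzw]
  field_simp
  simp [hl]
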